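/- Let ψ : ℝ → ℝ be twice continuously differentiable with |ψ''(ξ)| ≤ C + √|ξ| · ω(|ξ|) for all ξ ∈ ℝ, where C ∈ [0,∞) and ω : [0,∞) → [0,∞) is bounded and Borel measurable with ω(s) → 0 as s → ∞. Then there exists a function C : (0,∞) → [0,∞) such that for every ε > 0 and all continuously differentiable x, y : [0,1] → ℝ with x(0) = x(1) = y(0) = y(1) = 0: (1/2) ∫₀¹ y(r)² x'(r) ψ''(x(r)) dr ≤ (1/2)‖y'‖₂² + ( ε‖x'‖₂² + C(ε) ) ‖y‖₂². -/

import Mathlib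

open Set MeasureTheory


lemma intOn01 {f : ℝ → ℝ} (hf : ContinuousOn f (Icc 0 1)) :
    IntegrableOn f (Ioo (0:ℝ) 1) := by
  exact (hf.integrableOn_Icc).mono_set Ioo_subset_Icc_self

lemma finmeas : IsFiniteMeasure (volume.restrict (Ioo (0:ℝ) 1)) := by
  constructor
  rw [Measure.restrict_apply_univ, Real.volume_Ioo]
  norm_num

lemma memL2 {f : ℝ → ℝ} (hf : ContinuousOn f (Icc 0 1)) :
    MemLp f (ENNReal.ofReal 2) (volume.restrict (Ioo (0:ℝ) 1)) := by
  have := finmeas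
  obtain ⟨M, hM⟩ := (isCompact_Icc : IsCompact (Icc (0:ℝ) 1)).exists_bound_of_continuousOn hf
  refine MemLp.of_bound ?_ M ?_
  · exact (hf.mono Ioo_subset_Icc_self).aestronglyMeasurable measurableSet_Ioo
  · filter_upwards [self_mem_ae_restrict measurableSet_Ioo] with r hr
    exact hM r (Ioo_subset_Icc_self hr)

lemma cs01 {f g : ℝ → ℝ} (hf : ContinuousOn f (Icc 0 1)) (hg : ContinuousOn g (Icc 0 1))
    (hf0 : ∀ r, 0 ≤ f r) (hg0 : ∀ r, 0 ≤ g r) :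
    ∫ r in Ioo (0:ℝ) 1, f r * g r ≤
      Real.sqrt (∫ r in Ioo (0:ℝ) 1, (f r) ^ 2) * Real.sqrt (∫ r in Ioo (0:ℝ) 1, (g r) ^ 2) := by
  have hpq : Real.HolderConjugate 2 2 := ⟨by norm_num, by norm_num, by norm_num⟩
  have h := integral_mul_le_Lp_mul_Lq_of_nonneg (μ := volume.restrict (Ioo (0:ℝ) 1)) hpq
    (Filter.Eventually.of_forall hf0) (Filter.Eventually.of_forall hg0) (memL2 hf) (memL2 hg)
  have e1 : ∀ (h : ℝ → ℝ), (∫ r in Ioo (0:ℝ) 1, (h r) ^ (2:ℝ)) = ∫ r in Ioo (0:ℝ) 1, (h r) ^ 2 := by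
    intro h
    refine integral_congr_ae (Filter.Eventually.of_forall fun r => ?_)
    simp [Real.rpow_two]
  rw [e1, e1] at h
  have n1 : (0:ℝ) ≤ ∫ r in Ioo (0:ℝ) 1, (f r) ^ 2 :=
    setIntegral_nonneg measurableSet_Ioo fun r _ => sq_nonneg _
  have n2 : (0:ℝ) ≤ ∫ r in Ioo (0:ℝ) 1, (g r) ^ 2 :=
    setIntegral_nonneg measurableSet_Ioo fun r _ => sq_nonneg _
  rw [Real.sqrt_eq_rpow, Real.sqrt_eq_rpow]
  exact h

lemma ftc01 {f f' : ℝ → ℝ}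
    (hf : ∀ r ∈ Icc (0:ℝ) 1, HasDerivWithinAt f (f' r) (Icc (0:ℝ) 1) r)
    (hf' : ContinuousOn f' (Icc 0 1)) {r : ℝ} (hr : r ∈ Icc (0:ℝ) 1) :
    ∫ t in Ioc (0:ℝ) r, f' t = f r - f 0 := by
  have hco : ContinuousOn f (Icc 0 1) := fun t ht => (hf t ht).continuousWithinAt
  have h := intervalIntegral.integral_eq_sub_of_hasDeriv_right_of_le hr.1
    (hco.mono (Icc_subset_Icc le_rfl hr.2))
    (fun t ht => (hf t ⟨ht.1.le, ht.2.le.trans hr.2⟩).mono_of_mem_nhdsWithin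
      (Icc_mem_nhdsGT_of_mem ⟨ht.1.le, ht.2.trans_le hr.2⟩))
    ((hf'.mono (Icc_subset_Icc le_rfl hr.2)).intervalIntegrable_of_Icc hr.1)
  rw [intervalIntegral.integral_of_le hr.1] at h
  exact h

lemma sup01 {f f' : ℝ → ℝ}
    (hf : ∀ r ∈ Icc (0:ℝ) 1, HasDerivWithinAt f (f' r) (Icc (0:ℝ) 1) r)
    (hf' : ContinuousOn f' (Icc 0 1)) (hf0 : f 0 = 0) {r : ℝ} (hr : r ∈ Icc (0:ℝ) 1) :
    |f r| ≤ ∫ t in Ioo (0:ℝ) 1, |f' t| := by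
  have h1 : f r = ∫ t in Ioc (0:ℝ) r, f' t := by rw [ftc01 hf hf' hr, hf0, sub_zero]
  have h2 : |∫ t in Ioc (0:ℝ) r, f' t| ≤ ∫ t in Ioc (0:ℝ) r, |f' t| := by
    simpa [Real.norm_eq_abs] using
      norm_integral_le_integral_norm (μ := volume.restrict (Ioc 0 r)) f'
  have h3 : (∫ t in Ioc (0:ℝ) r, |f' t|) ≤ ∫ t in Ioo (0:ℝ) 1, |f' t| := by
    refine setIntegral_mono_set (intOn01 hf'.abs) ?_ ?_
    · exact Filter.Eventually.of_forall fun t => abs_nonneg _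
    · refine MeasureTheory.ae_le_set.mpr (measure_mono_null ?_ (measure_singleton 1))
      intro t ht
      simp only [mem_diff, mem_Ioc, mem_Ioo, not_and, not_lt, mem_singleton_iff] at *
      exact le_antisymm (ht.1.2.trans hr.2) (ht.2 ht.1.1)
  rw [h1]
  exact h2.trans h3

lemma alg {ε δ A u a b : ℝ} (hε : 0 < ε) (hδ0 : 0 ≤ δ) (hδ1 : δ ≤ 1) (hδε : δ ≤ ε/2)
    (hA : 0 ≤ A) (hu : 0 ≤ u) (ha : 0 ≤ a) (hb : 0 ≤ b) :
    (A + δ*u) * (a^3*b*u^2) ≤ (1/2)*b^4 + (ε*u^4 + A^4/(4*ε^2))*a^4 := by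
  have key1 : A*(u^2*a^3*b) ≤ (ε/2)*u^4*a^4 + (A^2/(2*ε))*(a^2*b^2) := by
    rw [← sub_nonneg]
    have he : (ε/2)*u^4*a^4 + (A^2/(2*ε))*(a^2*b^2) - A*(u^2*a^3*b)
        = (ε*(u^2*a^2) - A*(a*b))^2/(2*ε) := by field_simp; ring
    rw [he]; positivity
  have key2 : (A^2/(2*ε))*(a^2*b^2) ≤ (1/4)*b^4 + (A^4/(4*ε^2))*a^4 := by
    rw [← sub_nonneg]
    have he : (1/4)*b^4 + (A^4/(4*ε^2))*a^4 - (A^2/(2*ε))*(a^2*b^2)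
        = (ε*b^2 - A^2*a^2)^2/(4*ε^2) := by field_simp; ring
    rw [he]; positivity
  have key3 : δ*(u^3*a^3*b) ≤ (ε/2)*u^4*a^4 + (1/4)*b^4 := by
    have amgm : (u*a)^3*b ≤ (3/4)*(u*a)^4 + (1/4)*b^4 := by
      nlinarith [sq_nonneg ((u*a)^2 - (u*a)*b), sq_nonneg ((u*a)^2 - b^2), mul_nonneg (mul_nonneg hu ha) hb, sq_nonneg (u*a - b), mul_nonneg (sq_nonneg (u*a - b)) (mul_nonneg (mul_nonneg hu ha) hb)]
    have h0 : (0:ℝ) ≤ (u*a)^4 := by positivity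
    have h1 : δ*((u*a)^3*b) ≤ δ*((3/4)*(u*a)^4 + (1/4)*b^4) := by
      apply mul_le_mul_of_nonneg_left amgm hδ0
    calc δ*(u^3*a^3*b) = δ*((u*a)^3*b) := by ring
      _ ≤ δ*((3/4)*(u*a)^4 + (1/4)*b^4) := h1
      _ ≤ (ε/2)*((u*a)^4) + (1/4)*b^4 := by
          nlinarith [mul_le_mul_of_nonneg_right hδε h0,
            mul_le_mul_of_nonneg_right hδ1 (pow_nonneg hb 4), mul_nonneg hε.le h0]
      _ = (ε/2)*u^4*a^4 + (1/4)*b^4 := by ring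
  nlinarith [key1, key2, key3]

lemma sqrt2_le_two : Real.sqrt 2 ≤ 2 := by
  nlinarith [Real.sq_sqrt (by norm_num : (0:ℝ) ≤ 2), Real.sqrt_nonneg 2]

set_option maxHeartbeats 1000000 in
/-- Let `ψ : ℝ → ℝ` be `C²` with `|ψ''(ξ)| ≤ C + √|ξ| ω(|ξ|)` where
`ω` is bounded, Borel measurable and vanishes at infinity (condition (Ψ)).  Then there is
a function `C : (0,∞) → [0,∞)` such that for every `ε > 0` and all `C¹` functions
`x, y : [0,1] → ℝ` vanishing at the endpoints:
`(1/2) ∫₀¹ y(r)² x'(r) ψ''(x r) dr ≤ (1/2)‖y'‖₂² + (ε ‖x'‖₂² + C(ε)) ‖y‖₂²`. -/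
theorem directional_derivative_burgers_bound
    (ψ : ℝ → ℝ) (hψ : ContDiff ℝ 2 ψ)
    (C : ℝ) (hC : 0 ≤ C)
    (ω : ℝ → ℝ) (hωmeas : Measurable ω) (hωpos : ∀ s, 0 ≤ ω s)
    (hωbdd : ∃ Cω : ℝ, ∀ s, ω s ≤ Cω)
    (hωlim : Filter.Tendsto ω Filter.atTop (nhds 0))
    (hψ'' : ∀ ξ : ℝ, |deriv (deriv ψ) ξ| ≤ C + Real.sqrt |ξ| * ω |ξ|) :
    ∃ Cε : ℝ → ℝ, (∀ ε : ℝ, 0 < ε → 0 ≤ Cε ε) ∧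
      ∀ (ε : ℝ), 0 < ε →
        ∀ (x x' y y' : ℝ → ℝ),
          (∀ r ∈ Icc (0:ℝ) 1, HasDerivWithinAt x (x' r) (Icc (0:ℝ) 1) r) →
          ContinuousOn x' (Icc (0:ℝ) 1) →
          (∀ r ∈ Icc (0:ℝ) 1, HasDerivWithinAt y (y' r) (Icc (0:ℝ) 1) r) →
          ContinuousOn y' (Icc (0:ℝ) 1) →
          x 0 = 0 → x 1 = 0 → y 0 = 0 → y 1 = 0 →
          (1 / 2) * ∫ r in Ioo (0:ℝ) 1, (y r) ^ 2 * x' r * deriv (deriv ψ) (x r) ≤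
            (1 / 2) * (∫ r in Ioo (0:ℝ) 1, (y' r) ^ 2)
              + (ε * (∫ r in Ioo (0:ℝ) 1, (x' r) ^ 2) + Cε ε)
                  * ∫ r in Ioo (0:ℝ) 1, (y r) ^ 2 := by
  classical
  obtain ⟨Cω, hCω⟩ := hωbdd
  have hCω0 : 0 ≤ Cω := (hωpos 0).trans (hCω 0)
  have hψ''c : Continuous (deriv (deriv ψ)) := by
    have hψ2 : ContDiff ℝ (1+1) ψ := by
      have h : ((1:WithTop ℕ∞)+1) = 2 := by norm_num
      rwa [h]
    exact ((contDiff_succ_iff_deriv.mp hψ2).2.2).continuous_deriv le_rfl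
  -- main claim for each ε
  have main : ∀ ε : ℝ, ∃ K : ℝ, 0 ≤ K ∧ (0 < ε →
      ∀ (x x' y y' : ℝ → ℝ),
          (∀ r ∈ Icc (0:ℝ) 1, HasDerivWithinAt x (x' r) (Icc (0:ℝ) 1) r) →
          ContinuousOn x' (Icc (0:ℝ) 1) →
          (∀ r ∈ Icc (0:ℝ) 1, HasDerivWithinAt y (y' r) (Icc (0:ℝ) 1) r) →
          ContinuousOn y' (Icc (0:ℝ) 1) →
          x 0 = 0 → x 1 = 0 → y 0 = 0 → y 1 = 0 →
          (1 / 2) * ∫ r in Ioo (0:ℝ) 1, (y r) ^ 2 * x' r * deriv (deriv ψ) (x r) ≤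
            (1 / 2) * (∫ r in Ioo (0:ℝ) 1, (y' r) ^ 2)
              + (ε * (∫ r in Ioo (0:ℝ) 1, (x' r) ^ 2) + K)
                  * ∫ r in Ioo (0:ℝ) 1, (y r) ^ 2) := by
    intro ε
    by_cases hε : 0 < ε
    swap
    · exact ⟨0, le_rfl, fun h => absurd h hε⟩
    -- choose δ and R
    obtain ⟨δ, hδ0, hδ1, hδε⟩ : ∃ δ : ℝ, 0 < δ ∧ δ ≤ 1 ∧ δ ≤ ε/2 :=
      ⟨min 1 (ε/2), lt_min one_pos (by positivity), min_le_left _ _, min_le_right _ _⟩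
    obtain ⟨R, hR0, hRω⟩ : ∃ R : ℝ, 0 ≤ R ∧ ∀ s, R ≤ s → ω s ≤ δ := by
      obtain ⟨R₀, hR₀⟩ := Filter.eventually_atTop.mp (hωlim.eventually_lt_const hδ0)
      exact ⟨max R₀ 0, le_max_right _ _, fun s hs => (hR₀ s ((le_max_left _ _).trans hs)).le⟩
    obtain ⟨A, hA0, hAeq⟩ : ∃ A : ℝ, 0 ≤ A ∧ A = C + Real.sqrt R * Cω :=
      ⟨_, add_nonneg hC (mul_nonneg (Real.sqrt_nonneg _) hCω0), rfl⟩
    obtain ⟨K, hK0, hKeq⟩ : ∃ K : ℝ, 0 ≤ K ∧ K = A^4/(4*ε^2) := ⟨_, by positivity, rfl⟩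
    refine ⟨K, hK0, fun _ x x' y y' hx hx' hy hy' hx0 hx1 hy0 hy1 => ?_⟩
    have hxc : ContinuousOn x (Icc 0 1) := fun t ht => (hx t ht).continuousWithinAt
    have hyc : ContinuousOn y (Icc 0 1) := fun t ht => (hy t ht).continuousWithinAt
    set m : ℝ := ∫ r in Ioo (0:ℝ) 1, (x' r) ^ 2 with hmdef
    set p : ℝ := ∫ r in Ioo (0:ℝ) 1, (y r) ^ 2 with hpdef
    set n : ℝ := ∫ r in Ioo (0:ℝ) 1, (y' r) ^ 2 with hndef
    have hm0 : 0 ≤ m := setIntegral_nonneg measurableSet_Ioo fun r _ => sq_nonneg _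
    have hp0 : 0 ≤ p := setIntegral_nonneg measurableSet_Ioo fun r _ => sq_nonneg _
    have hn0 : 0 ≤ n := setIntegral_nonneg measurableSet_Ioo fun r _ => sq_nonneg _
    have hqr : ∀ q : ℝ, 0 ≤ q → ∃ w : ℝ, 0 ≤ w ∧ w^2 = Real.sqrt q ∧ w^4 = q := by
      intro q hq
      refine ⟨Real.sqrt (Real.sqrt q), Real.sqrt_nonneg _, Real.sq_sqrt (Real.sqrt_nonneg _), ?_⟩
      rw [show (Real.sqrt (Real.sqrt q))^4 = ((Real.sqrt (Real.sqrt q))^2)^2 by ring,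
        Real.sq_sqrt (Real.sqrt_nonneg _), Real.sq_sqrt hq]
    obtain ⟨u, hu0, hu2, hu4⟩ := hqr m hm0
    obtain ⟨a, ha0, ha2, ha4⟩ := hqr p hp0
    obtain ⟨b, hb0, hb2, hb4⟩ := hqr n hn0
    -- sup bound for x
    have hxsup : ∀ r ∈ Icc (0:ℝ) 1, |x r| ≤ u^2 := by
      intro r hr
      have h1 := sup01 hx hx' hx0 hr
      have h2 : (∫ t in Ioo (0:ℝ) 1, |x' t|) = ∫ t in Ioo (0:ℝ) 1, |x' t| * 1 := by simp
      have h3 := cs01 hx'.abs continuousOn_const (fun t => abs_nonneg (x' t))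
        (fun _ => zero_le_one)
      have h4 : (∫ t in Ioo (0:ℝ) 1, |x' t| ^ 2) = m := by
        rw [hmdef]; exact setIntegral_congr_fun measurableSet_Ioo fun t _ => sq_abs _
      have h5 : (∫ t in Ioo (0:ℝ) 1, ((1:ℝ)) ^ 2) = 1 := by simp [Real.volume_Ioo]
      rw [h4, h5, Real.sqrt_one, mul_one] at h3
      rw [hu2]
      exact h1.trans (by rw [h2]; exact h3)
    -- pointwise bound on ψ''
    have hψbd : ∀ r ∈ Icc (0:ℝ) 1, |deriv (deriv ψ) (x r)| ≤ A + δ * u := by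
      intro r hr
      refine (hψ'' (x r)).trans ?_
      by_cases h : |x r| ≤ R
      · have h1 : Real.sqrt |x r| * ω |x r| ≤ Real.sqrt R * Cω :=
          mul_le_mul (Real.sqrt_le_sqrt h) (hCω _) (hωpos _) (Real.sqrt_nonneg _)
        have : 0 ≤ δ * u := mul_nonneg hδ0.le hu0
        rw [hAeq]; linarith
      · push_neg at h
        have h1 : ω |x r| ≤ δ := hRω _ h.le
        have h2 : Real.sqrt |x r| ≤ u := by
          have := Real.sqrt_le_sqrt (hxsup r hr)
          rwa [Real.sqrt_sq hu0] at this
        have h3 : Real.sqrt |x r| * ω |x r| ≤ u * δ :=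
          mul_le_mul h2 h1 (hωpos _) hu0
        have h4 : 0 ≤ Real.sqrt R * Cω := mul_nonneg (Real.sqrt_nonneg _) hCω0
        rw [hAeq]; linarith
    -- sup bound for y^2
    have hysup : ∀ r ∈ Icc (0:ℝ) 1, (y r)^2 ≤ 2*(a^2*b^2) := by
      intro r hr
      have hf : ∀ t ∈ Icc (0:ℝ) 1,
          HasDerivWithinAt (fun s => y s * y s) (y' t * y t + y t * y' t) (Icc (0:ℝ) 1) t :=
        fun t ht => (hy t ht).mul (hy t ht)
      have hf'c : ContinuousOn (fun t => y' t * y t + y t * y' t) (Icc 0 1) :=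
        (hy'.mul hyc).add (hyc.mul hy')
      have h1 := sup01 hf hf'c (by simp [hy0]) hr
      have h2 : |y r * y r| = (y r)^2 := by
        rw [abs_of_nonneg (mul_self_nonneg _)]; ring
      have h3 : (∫ t in Ioo (0:ℝ) 1, |y' t * y t + y t * y' t|)
          = ∫ t in Ioo (0:ℝ) 1, 2*(|y t| * |y' t|) := by
        refine setIntegral_congr_fun measurableSet_Ioo fun t _ => ?_
        rw [show y' t * y t + y t * y' t = 2*(y t * y' t) by ring, abs_mul, abs_mul, abs_two]
      have h4 := cs01 hyc.abs hy'.abs (fun t => abs_nonneg (y t)) (fun t => abs_nonneg (y' t))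
      have h5 : (∫ t in Ioo (0:ℝ) 1, |y t| ^ 2) = p := by
        rw [hpdef]; exact setIntegral_congr_fun measurableSet_Ioo fun t _ => sq_abs _
      have h6 : (∫ t in Ioo (0:ℝ) 1, |y' t| ^ 2) = n := by
        rw [hndef]; exact setIntegral_congr_fun measurableSet_Ioo fun t _ => sq_abs _
      rw [h5, h6, ← ha2, ← hb2] at h4
      rw [h3, integral_const_mul] at h1
      rw [← h2]
      calc |y r * y r| ≤ 2 * ∫ t in Ioo (0:ℝ) 1, |y t| * |y' t| := h1
        _ ≤ 2 * (a^2 * b^2) := by linarith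
    -- main integral estimates
    have hIlhs : IntegrableOn (fun r => (y r)^2 * x' r * deriv (deriv ψ) (x r)) (Ioo (0:ℝ) 1) :=
      intOn01 (((hyc.pow 2).mul hx').mul (hψ''c.comp_continuousOn hxc))
    have hIrhs : IntegrableOn (fun r => (y r)^2 * |x' r| * (A + δ*u)) (Ioo (0:ℝ) 1) :=
      intOn01 (((hyc.pow 2).mul hx'.abs).mul continuousOn_const)
    have step1 : (∫ r in Ioo (0:ℝ) 1, (y r)^2 * x' r * deriv (deriv ψ) (x r))
        ≤ ∫ r in Ioo (0:ℝ) 1, (y r)^2 * |x' r| * (A + δ*u) := by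
      refine setIntegral_mono_on hIlhs hIrhs measurableSet_Ioo fun r hr => ?_
      have hr' : r ∈ Icc (0:ℝ) 1 := Ioo_subset_Icc_self hr
      calc (y r)^2 * x' r * deriv (deriv ψ) (x r)
          ≤ |(y r)^2 * x' r * deriv (deriv ψ) (x r)| := le_abs_self _
        _ = (y r)^2 * |x' r| * |deriv (deriv ψ) (x r)| := by
            rw [abs_mul, abs_mul, abs_of_nonneg (sq_nonneg (y r))]
        _ ≤ (y r)^2 * |x' r| * (A + δ*u) := by
            refine mul_le_mul_of_nonneg_left (hψbd r hr') ?_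
            exact mul_nonneg (sq_nonneg _) (abs_nonneg _)
    have step2 : (∫ r in Ioo (0:ℝ) 1, (y r)^2 * |x' r| * (A + δ*u))
        = (∫ r in Ioo (0:ℝ) 1, (y r)^2 * |x' r|) * (A + δ*u) := by
      rw [← integral_mul_const]
    have step3 : (∫ r in Ioo (0:ℝ) 1, (y r)^2 * |x' r|)
        ≤ Real.sqrt (∫ r in Ioo (0:ℝ) 1, (y r)^4) * u^2 := by
      have h := cs01 (f := fun t => (y t)^2) (hyc.pow 2) hx'.abs (fun t => sq_nonneg (y t)) (fun t => abs_nonneg (x' t))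
      have h4 : (∫ t in Ioo (0:ℝ) 1, |x' t| ^ 2) = m := by
        rw [hmdef]; exact setIntegral_congr_fun measurableSet_Ioo fun t _ => sq_abs _
      have h5 : (∫ t in Ioo (0:ℝ) 1, ((y t)^2) ^ 2) = ∫ t in Ioo (0:ℝ) 1, (y t)^4 := by
        exact setIntegral_congr_fun measurableSet_Ioo fun t _ => by ring
      rw [h4, h5, ← hu2] at h
      exact h
    have step4 : (∫ r in Ioo (0:ℝ) 1, (y r)^4) ≤ 2*(a^2*b^2) * p := by
      have hmono : (∫ r in Ioo (0:ℝ) 1, (y r)^4)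
          ≤ ∫ r in Ioo (0:ℝ) 1, 2*(a^2*b^2) * (y r)^2 := by
        refine setIntegral_mono_on (intOn01 (hyc.pow 4))
          (intOn01 (continuousOn_const.mul (hyc.pow 2))) measurableSet_Ioo fun r hr => ?_
        have h1 := hysup r (Ioo_subset_Icc_self hr)
        have h2 : (y r)^4 = (y r)^2 * (y r)^2 := by ring
        rw [h2]
        exact mul_le_mul_of_nonneg_right h1 (sq_nonneg _)
      rwa [integral_const_mul] at hmono
    -- combine
    have hy4nn : 0 ≤ ∫ r in Ioo (0:ℝ) 1, (y r)^4 :=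
      setIntegral_nonneg measurableSet_Ioo fun r _ => by positivity
    have hsq2 : Real.sqrt (∫ r in Ioo (0:ℝ) 1, (y r)^4) ≤ Real.sqrt 2 * (a^3*b) := by
      have he : (Real.sqrt 2 * (a^3*b))^2 = 2*(a^2*b^2)*(a^4) := by
        rw [mul_pow, Real.sq_sqrt (by norm_num : (0:ℝ) ≤ 2)]; ring
      have h1 : Real.sqrt (∫ r in Ioo (0:ℝ) 1, (y r)^4)
          ≤ Real.sqrt (2*(a^2*b^2)*(a^4)) := Real.sqrt_le_sqrt (by rw [ha4]; exact step4)
      rwa [← he, Real.sqrt_sq (by positivity)] at h1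
    have hJ : (∫ r in Ioo (0:ℝ) 1, (y r)^2 * |x' r|) ≤ Real.sqrt 2 * (a^3*b) * u^2 :=
      step3.trans (mul_le_mul_of_nonneg_right hsq2 (sq_nonneg _))
    have hAδu : 0 ≤ A + δ*u := add_nonneg hA0 (mul_nonneg hδ0.le hu0)
    have hItot : (∫ r in Ioo (0:ℝ) 1, (y r)^2 * x' r * deriv (deriv ψ) (x r))
        ≤ Real.sqrt 2 * (a^3*b) * u^2 * (A + δ*u) := by
      refine step1.trans ?_
      rw [step2]
      exact mul_le_mul_of_nonneg_right hJ hAδu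
    have halg := alg hε hδ0.le hδ1 hδε hA0 hu0 ha0 hb0
    rw [← hKeq] at halg
    have hfac : Real.sqrt 2 * (a^3*b) * u^2 * (A + δ*u) ≤ 2 * ((A + δ*u) * (a^3*b*u^2)) := by
      have hQ : (0:ℝ) ≤ a^3*b * u^2 * (A + δ*u) := by positivity
      calc Real.sqrt 2 * (a^3*b) * u^2 * (A + δ*u)
          = Real.sqrt 2 * (a^3*b * u^2 * (A + δ*u)) := by ring
        _ ≤ 2 * (a^3*b * u^2 * (A + δ*u)) := mul_le_mul_of_nonneg_right sqrt2_le_two hQ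
        _ = 2 * ((A + δ*u) * (a^3*b*u^2)) := by ring
    have hfinal : (1/2) * (∫ r in Ioo (0:ℝ) 1, (y r)^2 * x' r * deriv (deriv ψ) (x r))
        ≤ (1/2)*b^4 + (ε*u^4 + K)*a^4 := by
      linarith [hItot, halg, hfac]
    calc (1/2) * (∫ r in Ioo (0:ℝ) 1, (y r)^2 * x' r * deriv (deriv ψ) (x r))
        ≤ (1/2)*b^4 + (ε*u^4 + K)*a^4 := hfinal
      _ = (1/2)*n + (ε*m + K)*p := by rw [hb4, hu4, ha4]
  choose K hK0 hK using main
  exact ⟨K, fun ε _ => hK0 ε, fun ε hε => hK ε hε⟩
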